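/- If X is a u-sorted array with witness list L_X and Y is a u-sorted array with witness list L_Y, then there exists a permutation Z of the multiset X ∪ Y together with a list L_Z ⊆ L_X ∪ L_Y such that Z is u-sorted with witness L_Z. -/

import Mathlib

/-- `X` is `u`-sorted with witness list `L`: `L` is a sorted sublist of `X` of at most
`20u` elements, each element of `L` splits `X` into smaller-before / larger-after, and
every segment of `X` determined by consecutive elements of `L` (or the boundary
segments) has at most `|X|/u` elements. -/
def USorted (u : ℕ) (X L : List ℝ) : Prop :=
  L.Sublist X ∧ L.Pairwise (· < ·) ∧ L.length ≤ 20 * u ∧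
  (∀ a ∈ L, ∃ p q, X = p ++ a :: q ∧ (∀ y ∈ p, y < a) ∧ (∀ y ∈ q, a < y)) ∧
  (L = [] → (X.length : ℝ) ≤ (X.length : ℝ) / u) ∧
  (∀ a L', L = a :: L' →
    ((X.countP fun y => decide (y < a)) : ℝ) ≤ (X.length : ℝ) / u) ∧
  (∀ a L', L = L' ++ [a] →
    ((X.countP fun y => decide (a < y)) : ℝ) ≤ (X.length : ℝ) / u) ∧
  (∀ L₁ a b L₂, L = L₁ ++ a :: b :: L₂ →
    ((X.countP fun y => decide (a < y ∧ y < b)) : ℝ) ≤ (X.length : ℝ) / u)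

open List

lemma countP_disjoint_le (l : List ℝ) (p q s : ℝ → Bool)
    (h1 : ∀ x, p x = true → s x = true) (h2 : ∀ x, q x = true → s x = true)
    (h3 : ∀ x, ¬(p x = true ∧ q x = true)) :
    l.countP p + l.countP q ≤ l.countP s := by
  induction l with
  | nil => simp
  | cons z t ih =>
    simp only [countP_cons]
    rcases hp : p z <;> rcases hq : q z <;> simp_all <;> omega

lemma key_ineq (Z : List ℝ) (a b : ℝ) (ha : a ∈ Z) (hab : a < b) :
    Z.countP (fun y => decide (a < y ∧ y < b)) + Z.countP (fun y => decide (y < a)) + 1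
      ≤ Z.countP (fun y => decide (y < b)) := by
  obtain ⟨s, t, rfl⟩ := List.append_of_mem ha
  simp only [countP_append, countP_cons]
  have h1 := countP_disjoint_le s (fun y => decide (a < y ∧ y < b)) (fun y => decide (y < a))
    (fun y => decide (y < b)) (by intro x; simp only [decide_eq_true_eq]; tauto)
    (by intro x; simp only [decide_eq_true_eq]; intro h; linarith)
    (by intro x; simp only [decide_eq_true_eq]; rintro ⟨h1, h2⟩; linarith [h1.1])
  have h2 := countP_disjoint_le t (fun y => decide (a < y ∧ y < b)) (fun y => decide (y < a))
    (fun y => decide (y < b)) (by intro x; simp only [decide_eq_true_eq]; tauto)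
    (by intro x; simp only [decide_eq_true_eq]; intro h; linarith)
    (by intro x; simp only [decide_eq_true_eq]; rintro ⟨h1, h2⟩; linarith [h1.1])
  have e1 : (decide (a < a ∧ a < b)) = false := by simp
  have e2 : (decide (a < a)) = false := by simp
  have e3 : (decide (a < b)) = true := by simp [hab]
  rw [e1, e2, e3]
  simp only [if_false, if_true, Bool.false_eq_true]
  omega

lemma sorted_split (L : List ℝ) (hs : L.Pairwise (· < ·)) (a b : ℝ)
    (h : ∀ c ∈ L, c ≤ a ∨ b ≤ c) :
    ∃ L₁ L₂, L = L₁ ++ L₂ ∧ (∀ y ∈ L₁, y ≤ a) ∧ (∀ y ∈ L₂, b ≤ y) := by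
  induction L with
  | nil => exact ⟨[], [], by simp, by simp, by simp⟩
  | cons c t ih =>
    rcases h c (by simp) with hc | hc
    · obtain ⟨L₁, L₂, het, h1, h2⟩ := ih hs.of_cons (fun x hx => h x (by simp [hx]))
      exact ⟨c :: L₁, L₂, by simp [het], by
        intro y hy; rcases List.mem_cons.1 hy with rfl | hy
        · exact hc
        · exact h1 y hy, h2⟩
    · refine ⟨[], c :: t, by simp, by simp, ?_⟩
      intro y hy
      rcases List.mem_cons.1 hy with rfl | hy
      · exact hc
      · exact le_of_lt (lt_of_le_of_lt hc (List.rel_of_pairwise_cons hs hy))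

lemma USorted_below {u : ℕ} {X LX : List ℝ} (h : USorted u X LX) (b : ℝ)
    (hno : ∀ c ∈ LX, ¬ c < b) :
    ((X.countP fun y => decide (y < b)) : ℝ) ≤ (X.length : ℝ) / u := by
  obtain ⟨_, _, _, _, h5, h6, _, _⟩ := h
  cases LX with
  | nil =>
    refine le_trans ?_ (h5 rfl)
    exact_mod_cast List.countP_le_length
  | cons d L' =>
    have hbd : b ≤ d := not_lt.1 (hno d (by simp))
    refine le_trans ?_ (h6 d L' rfl)
    have := List.countP_mono_left (l := X) (p := fun y => decide (y < b))
      (q := fun y => decide (y < d)) (by intro x _ hx; simp only [decide_eq_true_eq] at *; linarith)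
    exact_mod_cast this

lemma USorted_above {u : ℕ} {X LX : List ℝ} (h : USorted u X LX) (a : ℝ)
    (hno : ∀ c ∈ LX, ¬ a < c) :
    ((X.countP fun y => decide (a < y)) : ℝ) ≤ (X.length : ℝ) / u := by
  obtain ⟨_, _, _, _, h5, _, h7, _⟩ := h
  rcases LX.eq_nil_or_concat with rfl | ⟨L', c, rfl⟩
  · refine le_trans ?_ (h5 rfl)
    exact_mod_cast List.countP_le_length
  · have hca : c ≤ a := not_lt.1 (hno c (by simp))
    refine le_trans ?_ (h7 c L' (by simp))
    have := List.countP_mono_left (l := X) (p := fun y => decide (a < y))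
      (q := fun y => decide (c < y)) (by intro x _ hx; simp only [decide_eq_true_eq] at *; linarith)
    exact_mod_cast this

lemma USorted_between {u : ℕ} {X LX : List ℝ} (h : USorted u X LX) (a b : ℝ)
    (hno : ∀ c ∈ LX, ¬ (a < c ∧ c < b)) :
    ((X.countP fun y => decide (a < y ∧ y < b)) : ℝ) ≤ (X.length : ℝ) / u := by
  obtain ⟨hsub, hsort, hlen, hsplit, h5, h6, h7, h8⟩ := h
  obtain ⟨L₁, L₂, heq, hL₁, hL₂⟩ := sorted_split LX hsort a b (by
    intro c hc
    by_cases hca : c ≤ a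
    · exact Or.inl hca
    · exact Or.inr (not_lt.1 (fun hcb => hno c hc ⟨not_le.1 hca, hcb⟩)))
  subst heq
  rcases L₁.eq_nil_or_concat with rfl | ⟨L₁', c, rfl⟩
  · cases L₂ with
    | nil =>
      refine le_trans ?_ (h5 (by simp))
      exact_mod_cast List.countP_le_length
    | cons d L₂' =>
      have hbd : b ≤ d := hL₂ d (by simp)
      refine le_trans ?_ (h6 d L₂' (by simp))
      have := List.countP_mono_left (l := X) (p := fun y => decide (a < y ∧ y < b))
        (q := fun y => decide (y < d)) (by
          intro x _ hx; simp only [decide_eq_true_eq] at *; exact lt_of_lt_of_le hx.2 hbd)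
      exact_mod_cast this
  · cases L₂ with
    | nil =>
      have hca : c ≤ a := hL₁ c (by simp)
      refine le_trans ?_ (h7 c L₁' (by simp))
      have := List.countP_mono_left (l := X) (p := fun y => decide (a < y ∧ y < b))
        (q := fun y => decide (c < y)) (by
          intro x _ hx; simp only [decide_eq_true_eq] at *; exact lt_of_le_of_lt hca hx.1)
      exact_mod_cast this
    | cons d L₂' =>
      have hca : c ≤ a := hL₁ c (by simp)
      have hbd : b ≤ d := hL₂ d (by simp)
      refine le_trans ?_ (h8 L₁' c d L₂' (by simp))
      have := List.countP_mono_left (l := X) (p := fun y => decide (a < y ∧ y < b))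
        (q := fun y => decide (c < y ∧ y < d)) (by
          intro x _ hx; simp only [decide_eq_true_eq] at *
          exact ⟨lt_of_le_of_lt hca hx.1, lt_of_lt_of_le hx.2 hbd⟩)
      exact_mod_cast this

lemma sorted_mem_split (Z : List ℝ) (hs : Z.Pairwise (· < ·)) (a : ℝ) (ha : a ∈ Z) :
    ∃ p q, Z = p ++ a :: q ∧ (∀ y ∈ p, y < a) ∧ (∀ y ∈ q, a < y) := by
  obtain ⟨p, q, rfl⟩ := List.append_of_mem ha
  rw [List.pairwise_append] at hs
  exact ⟨p, q, rfl, fun y hy => hs.2.2 y hy a (by simp),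
    fun y hy => List.rel_of_pairwise_cons hs.2.1 hy⟩

lemma sorted_lt_of_le_nodup {Z : List ℝ} (h1 : Z.Pairwise (· ≤ ·)) (h2 : Z.Nodup) :
    Z.Pairwise (· < ·) :=
  (h1.and h2).imp (fun h => lt_of_le_of_ne h.1 h.2)

lemma sublist_of_sorted_subset (K Z : List ℝ) (hnd : K.Nodup) (hsub : K ⊆ Z)
    (h1 : K.Pairwise (· < ·)) (h2 : Z.Pairwise (· < ·)) : K.Sublist Z := by
  haveI : IsAntisymm ℝ (· < ·) := ⟨fun a b h h' => absurd h' (asymm h)⟩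
  obtain ⟨l', hp, hs⟩ := hnd.subperm hsub
  have hls : l'.Pairwise (· < ·) := List.Pairwise.sublist hs h2
  have : l' = K := List.Perm.eq_of_pairwise (fun _ _ _ _ h h' => absurd h' (asymm h)) hls h1 hp
  rwa [this] at hs

lemma rnk_lt_length {Z : List ℝ} {m : ℝ} (hm : m ∈ Z) :
    (Z.countP fun y => decide (y < m)) < Z.length := by
  obtain ⟨s, t, rfl⟩ := List.append_of_mem hm
  simp only [countP_append, countP_cons, length_append, length_cons]
  have h1 := List.countP_le_length (p := fun y => decide (y < m)) (l := s)
  have h2 := List.countP_le_length (p := fun y => decide (y < m)) (l := t)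
  have : ¬ (m < m) := lt_irrefl m
  simp [this]
  omega

/-- rank of `x` in `Z` -/
noncomputable def rnk (Z : List ℝ) (x : ℝ) : ℕ := Z.countP fun y => decide (y < x)

/-- block index of `x` -/
noncomputable def blkf (Z : List ℝ) (u : ℕ) (x : ℝ) : ℕ := rnk Z x * u / Z.length

lemma rnk_mono (Z : List ℝ) {x y : ℝ} (h : x ≤ y) : rnk Z x ≤ rnk Z y :=
  List.countP_mono_left (by intro a _ ha; simp only [decide_eq_true_eq] at *; linarith)

lemma blkf_mono (Z : List ℝ) (u : ℕ) {x y : ℝ} (h : x ≤ y) : blkf Z u x ≤ blkf Z u y :=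
  Nat.div_le_div_right (Nat.mul_le_mul_right u (rnk_mono Z h))

/-- the thinned witness list -/
noncomputable def keepK (Z : List ℝ) (u : ℕ) (M : List ℝ) : List ℝ :=
  M.filter (fun m => decide ((∀ m' ∈ M, blkf Z u m' = blkf Z u m → m ≤ m') ∨
    (∀ m' ∈ M, blkf Z u m' = blkf Z u m → m' ≤ m)))

lemma keepK_sublist (Z : List ℝ) (u : ℕ) (M : List ℝ) : (keepK Z u M).Sublist M :=
  List.filter_sublist

lemma mem_keepK {Z : List ℝ} {u : ℕ} {M : List ℝ} {m : ℝ} :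
    m ∈ keepK Z u M ↔ m ∈ M ∧ ((∀ m' ∈ M, blkf Z u m' = blkf Z u m → m ≤ m') ∨
      (∀ m' ∈ M, blkf Z u m' = blkf Z u m → m' ≤ m)) := by
  simp [keepK, List.mem_filter]

lemma keepK_first {Z : List ℝ} {u : ℕ} {M : List ℝ} {m : ℝ} (hm : m ∈ M) :
    ∃ f ∈ keepK Z u M, f ≤ m ∧ blkf Z u f = blkf Z u m := by
  classical
  set S := M.filter (fun x => decide (blkf Z u x = blkf Z u m)) with hS
  have hmS : m ∈ S := by simp [hS, List.mem_filter, hm]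
  have hne : S.toFinset.Nonempty := ⟨m, List.mem_toFinset.2 hmS⟩
  set f := S.toFinset.min' hne with hf
  have hfS : f ∈ S := List.mem_toFinset.1 (S.toFinset.min'_mem hne)
  have hfM : f ∈ M := (List.mem_filter.1 hfS).1
  have hfblk : blkf Z u f = blkf Z u m := by
    have := (List.mem_filter.1 hfS).2; simpa using this
  refine ⟨f, ?_, S.toFinset.min'_le m (List.mem_toFinset.2 hmS), hfblk⟩
  refine mem_keepK.2 ⟨hfM, Or.inl ?_⟩
  intro m' hm' hblk'
  exact S.toFinset.min'_le m' (List.mem_toFinset.2 (by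
    simp [hS, List.mem_filter, hm', hblk'.trans hfblk]))

lemma keepK_last {Z : List ℝ} {u : ℕ} {M : List ℝ} {m : ℝ} (hm : m ∈ M) :
    ∃ g ∈ keepK Z u M, m ≤ g ∧ blkf Z u g = blkf Z u m := by
  classical
  set S := M.filter (fun x => decide (blkf Z u x = blkf Z u m)) with hS
  have hmS : m ∈ S := by simp [hS, List.mem_filter, hm]
  have hne : S.toFinset.Nonempty := ⟨m, List.mem_toFinset.2 hmS⟩
  set g := S.toFinset.max' hne with hg
  have hgS : g ∈ S := List.mem_toFinset.1 (S.toFinset.max'_mem hne)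
  have hgM : g ∈ M := (List.mem_filter.1 hgS).1
  have hgblk : blkf Z u g = blkf Z u m := by
    have := (List.mem_filter.1 hgS).2; simpa using this
  refine ⟨g, ?_, S.toFinset.le_max' m (List.mem_toFinset.2 hmS), hgblk⟩
  refine mem_keepK.2 ⟨hgM, Or.inr ?_⟩
  intro m' hm' hblk'
  exact S.toFinset.le_max' m' (List.mem_toFinset.2 (by
    simp [hS, List.mem_filter, hm', hblk'.trans hgblk]))

/-- same-block count bound -/
lemma same_block_bound {Z : List ℝ} {u : ℕ} (hu : 0 < u) {a b : ℝ} (ha : a ∈ Z)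
    (hab : a < b) (hblk : blkf Z u a = blkf Z u b) :
    ((Z.countP fun y => decide (a < y ∧ y < b)) : ℝ) ≤ (Z.length : ℝ) / u := by
  have hn : 0 < Z.length := List.length_pos_iff.2 (by rintro rfl; simp at ha)
  have h1 := key_ineq Z a b ha hab
  have hbu : rnk Z b * u < (blkf Z u b + 1) * Z.length :=
    (Nat.div_lt_iff_lt_mul hn).1 (Nat.lt_succ_self _)
  have hau : blkf Z u a * Z.length ≤ rnk Z a * u :=
    (Nat.le_div_iff_mul_le hn).1 (le_refl (blkf Z u a))
  rw [le_div_iff₀ (by exact_mod_cast hu : (0:ℝ) < (u:ℝ))]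
  have h1' : ((Z.countP fun y => decide (a < y ∧ y < b)) : ℝ) + rnk Z a + 1 ≤ rnk Z b := by
    exact_mod_cast h1
  have hbu' : (rnk Z b : ℝ) * u < ((blkf Z u b : ℝ) + 1) * Z.length := by exact_mod_cast hbu
  have hau' : (blkf Z u a : ℝ) * Z.length ≤ (rnk Z a : ℝ) * u := by exact_mod_cast hau
  have hblk' : (blkf Z u a : ℝ) = blkf Z u b := by exact_mod_cast hblk
  have hu0 : (0:ℝ) ≤ (u:ℝ) := by positivity
  nlinarith [mul_le_mul_of_nonneg_right h1' hu0]

lemma blkf_lt {Z : List ℝ} {u : ℕ} (hu : 0 < u) {m : ℝ} (hm : m ∈ Z) :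
    blkf Z u m < u := by
  have hn : 0 < Z.length := List.length_pos_iff.2 (by rintro rfl; simp at hm)
  have h := rnk_lt_length hm
  rw [blkf, Nat.div_lt_iff_lt_mul hn]
  calc rnk Z m * u < Z.length * u := by
        exact Nat.mul_lt_mul_of_lt_of_le h (le_refl u) hu
    _ = u * Z.length := Nat.mul_comm _ _

lemma keepK_length {Z : List ℝ} {u : ℕ} (hu : 0 < u) {M : List ℝ}
    (hMnd : M.Nodup) (hMZ : M ⊆ Z) : (keepK Z u M).length ≤ 2 * u := by
  classical
  have hKnd : (keepK Z u M).Nodup := List.Pairwise.sublist (keepK_sublist Z u M) hMnd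
  have hcard : (keepK Z u M).toFinset.card = (keepK Z u M).length :=
    List.toFinset_card_of_nodup hKnd
  have hmain : (keepK Z u M).toFinset.card ≤
      ((Finset.range u) ×ˢ (Finset.univ : Finset Bool)).card := by
    apply Finset.card_le_card_of_injOn
      (fun m => (blkf Z u m, decide (∀ m' ∈ M, blkf Z u m' = blkf Z u m → m ≤ m')))
    · intro m hm
      have hmK : m ∈ keepK Z u M := List.mem_toFinset.1 hm
      have hmM : m ∈ M := (mem_keepK.1 hmK).1
      refine Finset.mem_product.2 ⟨?_, Finset.mem_univ _⟩
      exact Finset.mem_range.2 (blkf_lt hu (hMZ hmM))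
    · intro m1 h1 m2 h2 heq
      have hm1K := List.mem_toFinset.1 h1
      have hm2K := List.mem_toFinset.1 h2
      obtain ⟨hm1M, hc1⟩ := mem_keepK.1 hm1K
      obtain ⟨hm2M, hc2⟩ := mem_keepK.1 hm2K
      have hblk : blkf Z u m1 = blkf Z u m2 := congrArg Prod.fst heq
      have hdec := congrArg Prod.snd heq
      simp only at hdec
      have hiff : (∀ m' ∈ M, blkf Z u m' = blkf Z u m1 → m1 ≤ m') ↔
          (∀ m' ∈ M, blkf Z u m' = blkf Z u m2 → m2 ≤ m') := decide_eq_decide.1 hdec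
      by_cases hP : (∀ m' ∈ M, blkf Z u m' = blkf Z u m1 → m1 ≤ m')
      · exact le_antisymm (hP m2 hm2M hblk.symm) ((hiff.1 hP) m1 hm1M hblk)
      · have hQ1 := hc1.resolve_left hP
        have hQ2 := hc2.resolve_left (fun h => hP (hiff.2 h))
        exact le_antisymm (hQ2 m1 hm1M hblk) (hQ1 m2 hm2M hblk.symm)
  have hcardp : ((Finset.range u) ×ˢ (Finset.univ : Finset Bool)).card = u * 2 := by
    simp [Finset.card_product]
  omega

/-- Two `u`-sorted arrays can be merged: there is a permutation `Z` of the multiset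
`X ∪ Y` together with a witness list `L_Z ⊆ L_X ∪ L_Y` making `Z` `u`-sorted. -/
theorem stmt8 (u : ℕ) (X Y LX LY : List ℝ) (hnd : (X ++ Y).Nodup)
    (hX : USorted u X LX) (hY : USorted u Y LY) :
    ∃ Z LZ : List ℝ, Z.Perm (X ++ Y) ∧ (∀ a ∈ LZ, a ∈ LX ++ LY) ∧
      USorted u Z LZ := by
  classical
  by_cases hu : u = 0
  · subst hu
    -- degenerate case : everything must be empty
    have hLXnil : LX = [] := List.length_eq_zero_iff.1 (Nat.le_zero.1 (by simpa using hX.2.2.1))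
    have hLYnil : LY = [] := List.length_eq_zero_iff.1 (Nat.le_zero.1 (by simpa using hY.2.2.1))
    have hXnil : X = [] := by
      have h5 := hX.2.2.2.2.1 hLXnil
      rw [Nat.cast_zero, div_zero] at h5
      have : (X.length : ℝ) = 0 := le_antisymm h5 (by positivity)
      exact List.length_eq_zero_iff.1 (by exact_mod_cast this)
    have hYnil : Y = [] := by
      have h5 := hY.2.2.2.2.1 hLYnil
      rw [Nat.cast_zero, div_zero] at h5
      have : (Y.length : ℝ) = 0 := le_antisymm h5 (by positivity)
      exact List.length_eq_zero_iff.1 (by exact_mod_cast this)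
    refine ⟨[], [], by simp [hXnil, hYnil], by simp, ?_, ?_, ?_, ?_, ?_, ?_, ?_, ?_⟩
    · exact List.nil_sublist _
    · exact List.Pairwise.nil
    · simp
    · simp
    · intro _; simp
    · intro a L' h; simp at h
    · intro a L' h; exact absurd h (by simp)
    · intro L₁ a b L₂ h; exact absurd h (by simp)
  · have hu' : 0 < u := Nat.pos_of_ne_zero hu
    set Z := insertionSort (· ≤ ·) (X ++ Y) with hZdef
    have hZperm : Z.Perm (X ++ Y) := List.perm_insertionSort _ _
    have hZnd : Z.Nodup := (hZperm.nodup_iff).2 hnd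
    have hZsort : Z.Pairwise (· < ·) :=
      sorted_lt_of_le_nodup (List.pairwise_insertionSort _ _) hZnd
    obtain ⟨hXnd, hYnd, hdisj⟩ := List.nodup_append.1 hnd
    have hLXY_nd : (LX ++ LY).Nodup := by
      rw [List.nodup_append]
      exact ⟨List.Pairwise.sublist hX.1 hXnd, List.Pairwise.sublist hY.1 hYnd,
        fun a ha b hb => hdisj a (hX.1.subset ha) b (hY.1.subset hb)⟩
    set M := insertionSort (· ≤ ·) (LX ++ LY) with hMdef
    have hMperm : M.Perm (LX ++ LY) := List.perm_insertionSort _ _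
    have hMnd : M.Nodup := (hMperm.nodup_iff).2 hLXY_nd
    have hMsort : M.Pairwise (· < ·) :=
      sorted_lt_of_le_nodup (List.pairwise_insertionSort _ _) hMnd
    have hMZ : M ⊆ Z := by
      intro m hm
      have h1 : m ∈ LX ++ LY := hMperm.subset hm
      have h2 : m ∈ X ++ Y := by
        rcases List.mem_append.1 h1 with h | h
        · exact List.mem_append.2 (Or.inl (hX.1.subset h))
        · exact List.mem_append.2 (Or.inr (hY.1.subset h))
      exact (hZperm.mem_iff).2 h2
    set K := keepK Z u M with hKdef
    have hKsubM : K.Sublist M := keepK_sublist Z u M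
    have hKM : K ⊆ M := hKsubM.subset
    have hKZ : K ⊆ Z := fun a ha => hMZ (hKM ha)
    have hKsort : K.Pairwise (· < ·) := List.Pairwise.sublist hKsubM hMsort
    have hKnd : K.Nodup := List.Pairwise.sublist hKsubM hMnd
    have hKsubZ : K.Sublist Z := sublist_of_sorted_subset K Z hKnd hKZ hKsort hZsort
    have hlenZ : Z.length = X.length + Y.length := by
      rw [hZperm.length_eq, List.length_append]
    have hcountZ : ∀ p : ℝ → Bool, Z.countP p = X.countP p + Y.countP p := by
      intro p
      rw [hZperm.countP_eq, List.countP_append]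
    -- combined segment bounds coming from USorted of X and Y
    have hbetween : ∀ a b : ℝ, (∀ c ∈ M, ¬(a < c ∧ c < b)) →
        ((Z.countP fun y => decide (a < y ∧ y < b)) : ℝ) ≤ (Z.length : ℝ) / u := by
      intro a b hno
      have hnoM : ∀ c, c ∈ LX ++ LY → ¬(a < c ∧ c < b) := by
        intro c hc
        exact hno c ((hMperm.mem_iff).2 hc)
      have hXb := USorted_between hX a b (fun c hc => hnoM c (List.mem_append.2 (Or.inl hc)))
      have hYb := USorted_between hY a b (fun c hc => hnoM c (List.mem_append.2 (Or.inr hc)))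
      rw [hcountZ, hlenZ]
      push_cast
      rw [add_div]
      exact add_le_add hXb hYb
    have hbelow : ∀ b : ℝ, (∀ c ∈ M, ¬ c < b) →
        ((Z.countP fun y => decide (y < b)) : ℝ) ≤ (Z.length : ℝ) / u := by
      intro b hno
      have hnoM : ∀ c, c ∈ LX ++ LY → ¬ c < b := fun c hc => hno c ((hMperm.mem_iff).2 hc)
      have hXb := USorted_below hX b (fun c hc => hnoM c (List.mem_append.2 (Or.inl hc)))
      have hYb := USorted_below hY b (fun c hc => hnoM c (List.mem_append.2 (Or.inr hc)))
      rw [hcountZ, hlenZ]; push_cast; rw [add_div]; exact add_le_add hXb hYb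
    have habove : ∀ a : ℝ, (∀ c ∈ M, ¬ a < c) →
        ((Z.countP fun y => decide (a < y)) : ℝ) ≤ (Z.length : ℝ) / u := by
      intro a hno
      have hnoM : ∀ c, c ∈ LX ++ LY → ¬ a < c := fun c hc => hno c ((hMperm.mem_iff).2 hc)
      have hXb := USorted_above hX a (fun c hc => hnoM c (List.mem_append.2 (Or.inl hc)))
      have hYb := USorted_above hY a (fun c hc => hnoM c (List.mem_append.2 (Or.inr hc)))
      rw [hcountZ, hlenZ]; push_cast; rw [add_div]; exact add_le_add hXb hYb
    refine ⟨Z, K, hZperm, fun a ha => hMperm.subset (hKM ha),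
      hKsubZ, hKsort, ?_, ?_, ?_, ?_, ?_, ?_⟩
    · -- length bound
      have := keepK_length hu' hMnd hMZ
      rw [← hKdef] at this
      omega
    · -- splitting property
      intro a ha
      exact sorted_mem_split Z hZsort a (hKZ ha)
    · -- K = [] case
      intro hKnil
      have hMnil : M = [] := by
        by_contra h
        obtain ⟨m, hm⟩ := List.exists_mem_of_ne_nil M h
        obtain ⟨f, hfK, _, _⟩ := keepK_first (Z := Z) (u := u) hm
        rw [← hKdef, hKnil] at hfK
        simp at hfK
      have hnil2 : LX ++ LY = [] := by
        rw [hMnil] at hMperm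
        exact hMperm.symm.eq_nil
      obtain ⟨hLXnil, hLYnil⟩ := List.append_eq_nil_iff.1 hnil2
      have hX5 := hX.2.2.2.2.1 hLXnil
      have hY5 := hY.2.2.2.2.1 hLYnil
      rw [hlenZ]; push_cast; rw [add_div]; exact add_le_add hX5 hY5
    · -- head segment
      intro a L' hKeq
      apply hbelow
      intro m hm hlt
      obtain ⟨f, hfK, hfm, _⟩ := keepK_first (Z := Z) (u := u) hm
      rw [← hKdef, hKeq] at hfK
      rcases List.mem_cons.1 hfK with rfl | hfL
      · exact absurd (lt_of_le_of_lt hfm hlt) (lt_irrefl f)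
      · have haf : a < f := by
          have := hKeq ▸ hKsort
          exact List.rel_of_pairwise_cons this hfL
        linarith [lt_of_le_of_lt hfm hlt]
    · -- last segment
      intro a L' hKeq
      apply habove
      intro m hm hlt
      obtain ⟨g, hgK, hmg, _⟩ := keepK_last (Z := Z) (u := u) hm
      rw [← hKdef, hKeq] at hgK
      have hsorted' : (L' ++ [a]).Pairwise (· < ·) := hKeq ▸ hKsort
      rcases List.mem_append.1 hgK with hgL | hga
      · have hga : g < a := by
          rw [List.pairwise_append] at hsorted'
          exact hsorted'.2.2 g hgL a (by simp)
        linarith [lt_of_lt_of_le hlt hmg]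
      · have : g = a := by simpa using hga
        subst this
        linarith [lt_of_lt_of_le hlt hmg]
    · -- middle segments
      intro L₁ a b L₂ hKeq
      have hKsort' : (L₁ ++ a :: b :: L₂).Pairwise (· < ·) := hKeq ▸ hKsort
      rw [List.pairwise_append] at hKsort'
      obtain ⟨hP1, hP2, hP3⟩ := hKsort'
      have hab : a < b := List.rel_of_pairwise_cons hP2 (by simp)
      have hP2' := List.pairwise_cons.1 hP2
      have hP2'' := List.pairwise_cons.1 hP2'.2
      have hnoK : ∀ c ∈ K, ¬(a < c ∧ c < b) := by
        intro c hc hcon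
        rw [hKeq] at hc
        rcases List.mem_append.1 hc with hcL | hcR
        · exact absurd hcon.1 (not_lt.2 (le_of_lt (hP3 c hcL a (by simp))))
        · rcases List.mem_cons.1 hcR with rfl | hcR2
          · exact lt_irrefl c hcon.1
          · rcases List.mem_cons.1 hcR2 with rfl | hcR3
            · exact lt_irrefl c hcon.2
            · exact absurd hcon.2 (not_lt.2 (le_of_lt (hP2''.1 c hcR3)))
      by_cases hmid : ∃ m ∈ M, a < m ∧ m < b
      · obtain ⟨m, hmM, ham, hmb⟩ := hmid
        obtain ⟨f, hfK, hfm, hfblk⟩ := keepK_first (Z := Z) (u := u) hmM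
        rw [← hKdef] at hfK
        have hfa : f ≤ a := by
          by_contra h
          exact hnoK f hfK ⟨not_le.1 h, lt_of_le_of_lt hfm hmb⟩
        have hba : blkf Z u a = blkf Z u m :=
          le_antisymm (blkf_mono Z u ham.le) (by rw [← hfblk]; exact blkf_mono Z u hfa)
        obtain ⟨g, hgK, hmg, hgblk⟩ := keepK_last (Z := Z) (u := u) hmM
        rw [← hKdef] at hgK
        have hbg : b ≤ g := by
          by_contra h
          exact hnoK g hgK ⟨lt_of_lt_of_le ham hmg, not_le.1 h⟩
        have hbb : blkf Z u b = blkf Z u m :=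
          le_antisymm (by rw [← hgblk]; exact blkf_mono Z u hbg) (blkf_mono Z u hmb.le)
        have haK : a ∈ K := by rw [hKeq]; simp
        exact same_block_bound hu' (hKZ haK) hab (hba.trans hbb.symm)
      · exact hbetween a b (fun c hc hcon => hmid ⟨c, hc, hcon⟩)
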